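/- For each n ∈ ℕ let y_n and ŷ_n be real-valued random variables on a probability space, and for each pair (α₁, α₂) with 0 ≤ α₁ ≤ α₂ ≤ 1 let [L_n^{α₁,α₂}, U_n^{α₁,α₂}] be a random closed interval (L, U measurable with L ≤ U) such that ŷ_n ∈ [L_n^{α₁,α₂}, U_n^{α₁,α₂}] almost surely and the intervals are asymptotically marginally conservative, i.e., liminf_{n→∞} P( L_n^{α₁,α₂} ≤ y_n ≤ U_n^{α₁,α₂} ) ≥ α₂ − α₁ for every such pair. If the sequence of prediction errors (y_n − ŷ_n)_{n∈ℕ} is not stochastically bounded, then there exists ε > 0 such that for every pair (α₁, α₂) with α₂ − α₁ ≥ 1 − ε one has limsup_{n→∞} E( U_n^{α₁,α₂} − L_n^{α₁,α₂} ) = ∞, i.e., the expected length of the prediction interval diverges to infinity along a subsequence. -/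

import Mathlib

open Filter MeasureTheory Set

lemma aux_tail_small {Ω : Type*} [MeasurableSpace Ω] (P : Measure Ω) [IsProbabilityMeasure P]
    (e : Ω → ℝ) (he : Measurable e) (η : ℝ) (hη : 0 < η) :
    ∃ K : ℕ, (P {ω | (K : ℝ) < |e ω|}).toReal ≤ η := by
  have hmeas : ∀ K : ℕ, MeasurableSet {ω | (K : ℝ) < |e ω|} := fun K =>
    measurableSet_lt measurable_const he.abs
  have hmono : Antitone (fun K : ℕ => {ω | (K : ℝ) < |e ω|}) := by
    intro i j hij ω hω
    have hij' : (i : ℝ) ≤ (j : ℝ) := by exact_mod_cast hij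
    exact lt_of_le_of_lt hij' hω
  have hiInt : (⋂ K : ℕ, {ω | (K : ℝ) < |e ω|}) = ∅ := by
    ext ω
    simp only [Set.mem_iInter, Set.mem_setOf_eq, Set.mem_empty_iff_false, iff_false, not_forall,
      not_lt]
    obtain ⟨K, hK⟩ := exists_nat_gt (|e ω|)
    exact ⟨K, hK.le⟩
  have htend := tendsto_measure_iInter_atTop (μ := P)
    (fun K => (hmeas K).nullMeasurableSet) hmono ⟨0, measure_ne_top _ _⟩
  rw [hiInt, measure_empty] at htend
  have : ∀ᶠ K : ℕ in atTop, (P {ω | (K : ℝ) < |e ω|}) < ENNReal.ofReal η := by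
    apply htend.eventually_lt_const
    simpa using hη
  obtain ⟨K, hK⟩ := this.exists
  refine ⟨K, ENNReal.toReal_le_of_le_ofReal hη.le hK.le⟩

/-- If a method of prediction intervals `[L, U]` always contains the predictor `ŷ_n` and is
asymptotically marginally conservative, but the prediction errors `y_n - ŷ_n` are not
stochastically bounded, then there is `ε > 0` such that for every nominal level
`α₂ - α₁ ≥ 1 - ε` the expected interval length diverges to `∞` along a subsequence
(i.e., its limsup is `∞`). -/
theorem expected_length_diverges_of_not_stochasticallyBounded
    (Ω : ℕ → Type*) [∀ n, MeasurableSpace (Ω n)]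
    (P : ∀ n, Measure (Ω n)) [∀ n, IsProbabilityMeasure (P n)]
    (y yhat : ∀ n, Ω n → ℝ)
    (L U : ∀ n : ℕ, ℝ → ℝ → Ω n → ℝ)
    (hy : ∀ n, Measurable (y n)) (hyhat : ∀ n, Measurable (yhat n))
    (hL : ∀ n α₁ α₂, Measurable (L n α₁ α₂)) (hU : ∀ n α₁ α₂, Measurable (U n α₁ α₂))
    (hLU : ∀ n α₁ α₂, 0 ≤ α₁ → α₁ ≤ α₂ → α₂ ≤ 1 → ∀ ω, L n α₁ α₂ ω ≤ U n α₁ α₂ ω)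
    (hcontain : ∀ n α₁ α₂, 0 ≤ α₁ → α₁ ≤ α₂ → α₂ ≤ 1 →
      ∀ᵐ ω ∂(P n), L n α₁ α₂ ω ≤ yhat n ω ∧ yhat n ω ≤ U n α₁ α₂ ω)
    (hconservative : ∀ α₁ α₂, 0 ≤ α₁ → α₁ ≤ α₂ → α₂ ≤ 1 →
      α₂ - α₁ ≤ Filter.liminf
        (fun n => ((P n) {ω | L n α₁ α₂ ω ≤ y n ω ∧ y n ω ≤ U n α₁ α₂ ω}).toReal)
        Filter.atTop)
    (hnotbounded : ¬ (∀ η : ℝ, 0 < η → ∃ K : ℝ, 0 < K ∧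
      ∀ n, ((P n) {ω | K < |y n ω - yhat n ω|}).toReal ≤ η)) :
    ∃ ε : ℝ, 0 < ε ∧ ∀ α₁ α₂, 0 ≤ α₁ → α₁ ≤ α₂ → α₂ ≤ 1 → 1 - ε ≤ α₂ - α₁ →
      Filter.limsup
        (fun n => ∫⁻ ω, ENNReal.ofReal (U n α₁ α₂ ω - L n α₁ α₂ ω) ∂(P n))
        Filter.atTop = ⊤ := by
  push_neg at hnotbounded
  obtain ⟨η, hη, hKwit⟩ := hnotbounded
  refine ⟨η / 2, by positivity, fun α₁ α₂ hα₁ hα₁₂ hα₂ hlev => ?_⟩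
  set cov : ℕ → ℝ :=
    fun n => ((P n) {ω | L n α₁ α₂ ω ≤ y n ω ∧ y n ω ≤ U n α₁ α₂ ω}).toReal with hcovdef
  have hliminf : 1 - η / 2 ≤ Filter.liminf cov atTop :=
    le_trans hlev (hconservative α₁ α₂ hα₁ hα₁₂ hα₂)
  have hcob : IsBoundedUnder (· ≥ ·) atTop cov :=
    ⟨0, Filter.eventually_map.2 (Filter.Eventually.of_forall fun n => ENNReal.toReal_nonneg)⟩
  have hev : ∀ᶠ n in atTop, 1 - 3 * η / 4 < cov n :=
    eventually_lt_of_lt_liminf (lt_of_lt_of_le (by linarith) hliminf) hcob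
  obtain ⟨N, hN⟩ := eventually_atTop.1 hev
  -- per-n tail bounds
  have haux := fun n => aux_tail_small (P n) (fun ω => y n ω - yhat n ω)
    ((hy n).sub (hyhat n)) η hη
  choose g hg using haux
  by_contra htop
  obtain ⟨m, hm⟩ := ENNReal.exists_nat_gt htop
  have hfreq : ∃ᶠ n in atTop,
      (m : ENNReal) ≤ ∫⁻ ω, ENNReal.ofReal (U n α₁ α₂ ω - L n α₁ α₂ ω) ∂(P n) := by
    rw [frequently_atTop]
    intro N'
    set N'' := max N N' with hN''def
    set K : ℝ := max (((Finset.range N'').sup g : ℕ) + 1 : ℝ) (4 * m / η + 1) with hKdef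
    have hK1 : (((Finset.range N'').sup g : ℕ) + 1 : ℝ) ≤ K := le_max_left _ _
    have hK2 : 4 * m / η + 1 ≤ K := le_max_right _ _
    have hKpos : 0 < K := lt_of_lt_of_le (by positivity) hK1
    obtain ⟨n, hn⟩ := hKwit K hKpos
    -- n must be ≥ N''
    have hnN'' : N'' ≤ n := by
      by_contra hlt
      push_neg at hlt
      have hgn : (g n : ℝ) ≤ K := by
        have h1 : g n ≤ (Finset.range N'').sup g :=
          Finset.le_sup (Finset.mem_range.2 hlt)
        have : (g n : ℝ) ≤ (((Finset.range N'').sup g : ℕ) : ℝ) := by exact_mod_cast h1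
        linarith
      have hsub : {ω | K < |y n ω - yhat n ω|} ⊆ {ω | (g n : ℝ) < |y n ω - yhat n ω|} :=
        fun ω hω => lt_of_le_of_lt hgn hω
      have := le_trans (ENNReal.toReal_mono (measure_ne_top _ _) (measure_mono hsub)) (hg n)
      exact absurd this (not_le.2 hn)
    refine ⟨n, le_trans (le_max_right N N') hnN'', ?_⟩
    -- coverage bound at n
    have hcovn : 1 - 3 * η / 4 < cov n := hN n (le_trans (le_max_left N N') hnN'')
    -- sets
    set A : Set (Ω n) := {ω | K < |y n ω - yhat n ω|} with hAdef
    set C : Set (Ω n) := {ω | L n α₁ α₂ ω ≤ y n ω ∧ y n ω ≤ U n α₁ α₂ ω} with hCdef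
    have hAmeas : MeasurableSet A := measurableSet_lt measurable_const ((hy n).sub (hyhat n)).abs
    have hCmeas : MeasurableSet C :=
      (measurableSet_le (hL n α₁ α₂) (hy n)).inter (measurableSet_le (hy n) (hU n α₁ α₂))
    -- probability of A ∩ C
    have hPAC : η / 4 ≤ ((P n) (A ∩ C)).toReal := by
      have hsub : A ⊆ (A ∩ C) ∪ Cᶜ := by
        intro ω hω
        by_cases hωC : ω ∈ C
        · exact Or.inl ⟨hω, hωC⟩
        · exact Or.inr hωC
      have h1 : (P n) A ≤ (P n) (A ∩ C) + (P n) Cᶜ :=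
        le_trans (measure_mono hsub) (measure_union_le _ _)
      have h2 : ((P n) A).toReal ≤ ((P n) (A ∩ C)).toReal + ((P n) Cᶜ).toReal := by
        have := ENNReal.toReal_mono (by
          exact ENNReal.add_ne_top.2 ⟨measure_ne_top _ _, measure_ne_top _ _⟩) h1
        rwa [ENNReal.toReal_add (measure_ne_top _ _) (measure_ne_top _ _)] at this
      have hcompl : ((P n) Cᶜ).toReal = 1 - cov n := by
        rw [prob_compl_eq_one_sub hCmeas,
          ENNReal.toReal_sub_of_le prob_le_one ENNReal.one_ne_top, ENNReal.toReal_one]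
      rw [hcompl] at h2
      have hA : η < ((P n) A).toReal := hn
      linarith
    have hPAC' : ENNReal.ofReal (η / 4) ≤ (P n) (A ∩ C) :=
      ENNReal.ofReal_le_of_le_toReal hPAC
    -- integral lower bound
    have hboundae : ∀ᵐ ω ∂(P n), (A ∩ C).indicator (fun _ => ENNReal.ofReal K) ω ≤
        ENNReal.ofReal (U n α₁ α₂ ω - L n α₁ α₂ ω) := by
      filter_upwards [hcontain n α₁ α₂ hα₁ hα₁₂ hα₂] with ω hω
      by_cases hωS : ω ∈ A ∩ C
      · rw [Set.indicator_of_mem hωS]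
        apply ENNReal.ofReal_le_ofReal
        obtain ⟨hωA, hωC1, hωC2⟩ := hωS
        have habs : |y n ω - yhat n ω| ≤ U n α₁ α₂ ω - L n α₁ α₂ ω := by
          rw [abs_le]
          obtain ⟨h1, h2⟩ := hω
          exact ⟨by linarith, by linarith⟩
        have := lt_of_lt_of_le hωA habs
        linarith
      · rw [Set.indicator_of_notMem hωS]
        exact zero_le
    have hint : ENNReal.ofReal K * (P n) (A ∩ C) ≤
        ∫⁻ ω, ENNReal.ofReal (U n α₁ α₂ ω - L n α₁ α₂ ω) ∂(P n) := by
      calc ENNReal.ofReal K * (P n) (A ∩ C)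
          = ∫⁻ ω, (A ∩ C).indicator (fun _ => ENNReal.ofReal K) ω ∂(P n) :=
            (lintegral_indicator_const (hAmeas.inter hCmeas) _).symm
        _ ≤ _ := lintegral_mono_ae hboundae
    -- conclude
    have hKm : (m : ℝ) ≤ K * (η / 4) := by
      have : 4 * m / η ≤ K - 1 := by linarith
      have h4 : 4 * (m : ℝ) ≤ (K - 1) * η := by
        rwa [div_le_iff₀ hη] at this
      nlinarith
    calc (m : ENNReal) = ENNReal.ofReal (m : ℝ) := by
          rw [ENNReal.ofReal_natCast]
      _ ≤ ENNReal.ofReal (K * (η / 4)) := ENNReal.ofReal_le_ofReal hKm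
      _ = ENNReal.ofReal K * ENNReal.ofReal (η / 4) := ENNReal.ofReal_mul hKpos.le
      _ ≤ ENNReal.ofReal K * (P n) (A ∩ C) := by
          exact mul_le_mul_right hPAC' _
      _ ≤ _ := hint
  have := le_limsup_of_frequently_le hfreq
  exact absurd this (not_le.2 hm)
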